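/- Correctness of the multi-hop Re-Sign algorithm in the Waters-based scheme (change of variables): fix ℓ ≥ 1 and β, φ, x_i, x_j, r, r', t_1, …, t_ℓ, r_0, …, r_ℓ ∈ ZMod p with x_j ≠ 0; set h = g^β, F = g^φ. Let the input be σ_0 = h^(x_i·t_1⋯t_ℓ)·F^r, σ_1 = g^r, σ_k = g^(x_i·t_1⋯t_{ℓ+2−k}) for 2 ≤ k ≤ ℓ+1, σ_{ℓ+1+k} = g^(t_k) for 1 ≤ k ≤ ℓ, and define σ'_0 = σ_0^(r_0⋯r_ℓ)·F^(r'); σ'_1 = σ_1^(r_0⋯r_ℓ)·g^(r'); σ'_k = σ_k^(r_0⋯r_{ℓ+2−k}) for 2 ≤ k ≤ ℓ+1; σ'_{ℓ+2} = (g^(x_i))^(r_0); σ'_{ℓ+3} = (g^(x_i·x_j⁻¹))^(r_0); σ'_k = σ_{k−2}^(r_{k−ℓ−3}) for ℓ+4 ≤ k ≤ 2ℓ+3. Then, with t̃_0 = r_0·x_i·x_j⁻¹, t̃_k = r_k·t_k for 1 ≤ k ≤ ℓ, and r'' = r·r_0⋯r_ℓ + r', the output satisfies σ'_0 = h^(x_j·t̃_0·t̃_1⋯t̃_ℓ)·F^(r''),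 σ'_1 = g^(r''), σ'_k = g^(x_j·t̃_0·t̃_1⋯t̃_{ℓ+2−k}) for 2 ≤ k ≤ ℓ+2, and σ'_{ℓ+2+m} = g^(t̃_{m−1}) for 1 ≤ m ≤ ℓ+1. -/

import Mathlib

/-- Correctness of the multi-hop Re-Sign algorithm in the Waters-based scheme
(change of variables): re-randomizing a level-(ℓ+1) Waters signature for `x_i`
with exponents `r_0, …, r_ℓ`, fresh randomness `r'` and the re-signature key
`g^(x_i·x_j⁻¹)` yields a level-(ℓ+2) signature for `x_j` with randomness
`t̃_0 = r_0·x_i·x_j⁻¹`, `t̃_k = r_k·t_k` and `r'' = r·r_0⋯r_ℓ + r'`. -/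
theorem stmt_14 {p : ℕ} [Fact p.Prime] {G : Type*} [CommGroup G]
    (g : G) (hg : orderOf g = p)
    (ℓ : ℕ) (hℓ : 1 ≤ ℓ) (β φ xi xj r r' : ZMod p) (hxj : xj ≠ 0)
    (t rr : ℕ → ZMod p)
    (h F : G) (hh : h = g ^ (β.val)) (hF : F = g ^ (φ.val))
    -- the input level-(ℓ+1) signature
    (σ : ℕ → G)
    (hσ0 : σ 0 = h ^ ((xi * ∏ i ∈ Finset.Icc 1 ℓ, t i).val) * F ^ (r.val))
    (hσ1 : σ 1 = g ^ (r.val))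
    (hσk : ∀ k, 2 ≤ k → k ≤ ℓ + 1 →
      σ k = g ^ ((xi * ∏ i ∈ Finset.Icc 1 (ℓ + 2 - k), t i).val))
    (hσt : ∀ k, 1 ≤ k → k ≤ ℓ → σ (ℓ + 1 + k) = g ^ ((t k).val))
    -- the output of Re-Sign
    (σ' : ℕ → G)
    (hσ'0 : σ' 0 = σ 0 ^ ((∏ i ∈ Finset.range (ℓ + 1), rr i).val) * F ^ (r'.val))
    (hσ'1 : σ' 1 = σ 1 ^ ((∏ i ∈ Finset.range (ℓ + 1), rr i).val) * g ^ (r'.val))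
    (hσ'k : ∀ k, 2 ≤ k → k ≤ ℓ + 1 →
      σ' k = σ k ^ ((∏ i ∈ Finset.range (ℓ + 3 - k), rr i).val))
    (hσ'l2 : σ' (ℓ + 2) = (g ^ (xi.val)) ^ ((rr 0).val))
    (hσ'l3 : σ' (ℓ + 3) = (g ^ ((xi * xj⁻¹).val)) ^ ((rr 0).val))
    (hσ'hi : ∀ k, ℓ + 4 ≤ k → k ≤ 2 * ℓ + 3 →
      σ' k = σ (k - 2) ^ ((rr (k - ℓ - 3)).val))
    -- the new randomness
    (tt : ℕ → ZMod p)
    (htt : ∀ k, tt k = if k = 0 then rr 0 * xi * xj⁻¹ else rr k * t k)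
    (r'' : ZMod p) (hr'' : r'' = r * (∏ i ∈ Finset.range (ℓ + 1), rr i) + r') :
    σ' 0 = h ^ ((xj * ∏ i ∈ Finset.range (ℓ + 1), tt i).val) * F ^ (r''.val) ∧
    σ' 1 = g ^ (r''.val) ∧
    (∀ k, 2 ≤ k → k ≤ ℓ + 2 →
      σ' k = g ^ ((xj * ∏ i ∈ Finset.range (ℓ + 3 - k), tt i).val)) ∧
    (∀ m, 1 ≤ m → m ≤ ℓ + 1 → σ' (ℓ + 2 + m) = g ^ ((tt (m - 1)).val)) := by
  have gval : ∀ n : ℕ, g ^ (n % p) = g ^ n := by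
    intro n
    rw [pow_eq_pow_iff_modEq, hg]
    exact Nat.mod_modEq n p
  have gadd : ∀ a b : ZMod p, g ^ (a + b).val = g ^ a.val * g ^ b.val := by
    intro a b
    rw [ZMod.val_add, gval, pow_add]
  have gmul : ∀ a b : ZMod p, g ^ (a * b).val = (g ^ a.val) ^ b.val := by
    intro a b
    rw [ZMod.val_mul, gval, pow_mul]
  have geq : ∀ a b : ZMod p, a = b → g ^ a.val = g ^ b.val := fun a b hab => by rw [hab]
  have hinv : xj * xj⁻¹ = 1 := mul_inv_cancel₀ hxj
  have hIcc : ∀ m : ℕ, ∏ i ∈ Finset.Icc 1 m, t i = ∏ i ∈ Finset.range m, t (i + 1) := by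
    intro m
    rw [← Finset.Ico_add_one_right_eq_Icc, Finset.prod_Ico_eq_prod_range]
    simp [Nat.add_comm]
  have key : ∀ m : ℕ, xj * ∏ i ∈ Finset.range (m + 1), tt i
      = xi * (∏ i ∈ Finset.Icc 1 m, t i) * ∏ i ∈ Finset.range (m + 1), rr i := by
    intro m
    rw [Finset.prod_range_succ' tt m, Finset.prod_range_succ' rr m, hIcc m]
    simp only [htt, Nat.succ_ne_zero, if_false, if_pos rfl, if_true]
    rw [Finset.prod_mul_distrib]
    field_simp
  refine ⟨?_, ?_, ?_, ?_⟩
  · rw [hσ'0, hσ0, hh, hF, hr'', mul_pow]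
    simp only [← gmul]
    simp only [← gadd, ← mul_assoc]
    exact geq _ _ (by linear_combination (-β) * key ℓ)
  · rw [hσ'1, hσ1, hr'', gadd, ← gmul]
  · intro k hk2 hkl
    rcases eq_or_lt_of_le hkl with hkeq | hklt
    · subst hkeq
      have e : ℓ + 3 - (ℓ + 2) = 1 := by omega
      rw [hσ'l2, e, Finset.prod_range_one, htt 0, if_pos rfl, ← gmul]
      apply geq
      field_simp
    · have hkl1 : k ≤ ℓ + 1 := by omega
      obtain ⟨m, hm⟩ : ∃ m, ℓ + 2 - k = m + 1 := ⟨ℓ + 1 - k, by omega⟩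
      have h3 : ℓ + 3 - k = m + 2 := by omega
      rw [hσ'k k hk2 hkl1, hσk k hk2 hkl1, hm, h3, ← gmul]
      apply geq
      rw [Finset.prod_range_succ tt (m + 1), Finset.prod_range_succ rr (m + 1),
        Finset.prod_Icc_succ_top (by omega : 1 ≤ m + 1), htt (m + 1),
        if_neg (Nat.succ_ne_zero m)]
      linear_combination (-(rr (m + 1) * t (m + 1))) * key m
  · intro m hm1 hml
    rcases Nat.eq_or_lt_of_le hm1 with hmeq | hmgt
    · rw [← hmeq, show ℓ + 2 + 1 = ℓ + 3 from rfl, hσ'l3, ← gmul, htt 0, if_pos rfl]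
      apply geq; ring
    · have hk := hσ'hi (ℓ + 2 + m) (by omega) (by omega)
      have e1 : ℓ + 2 + m - 2 = ℓ + 1 + (m - 1) := by omega
      have e2 : ℓ + 2 + m - ℓ - 3 = m - 1 := by omega
      rw [hk, e1, e2, hσt (m - 1) (by omega) (by omega), ← gmul, htt (m - 1),
        if_neg (by omega)]
      apply geq; ring
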